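/- For every fixed α ∈ (0,1/2), the function φ: [0,1] → [0,1] defined by φ(t) = h(α * h⁻¹(t)) is convex on [0,1], where a*b := a(1-b)+b(1-a). -/

import Mathlib

open Real Filter MeasureTheory

/-- Binary entropy function (base-2 logarithm), with `binEnt 0 = binEnt 1 = 0`. -/
noncomputable def binEnt (p : ℝ) : ℝ :=
  -p * Real.logb 2 p - (1 - p) * Real.logb 2 (1 - p)

/-- Inverse of the binary entropy function, mapping `[0,1]` onto `[0,1/2]`. -/
noncomputable def binEntInv (y : ℝ) : ℝ :=
  sInf {p : ℝ | p ∈ Set.Icc (0:ℝ) (1/2) ∧ y ≤ binEnt p}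

/-- Binary convolution `a*b := a(1-b) + b(1-a)`. -/
def bConv (a b : ℝ) : ℝ := a * (1 - b) + b * (1 - a)

/-- Shannon entropy (in bits) of a distribution on a finite type. -/
noncomputable def entropyDist {β : Type*} [Fintype β] (p : β → ℝ) : ℝ :=
  ∑ b, -(p b * Real.logb 2 (p b))

/-- Probability of the path `x` under the stationary symmetric binary Markov process with
transition probability `q`: the first coordinate is uniform (`Bernoulli(1/2)`) and each
subsequent coordinate flips the previous one with probability `q`. -/
noncomputable def symPathProb (q : ℝ) (n : ℕ) (x : Fin n → Bool) : ℝ :=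
  ∏ i : Fin n,
    if (i : ℕ) = 0 then (1/2 : ℝ)
    else if x ⟨(i : ℕ) - 1, Nat.lt_of_le_of_lt (Nat.sub_le _ _) i.isLt⟩ = x i then 1 - q else q

/-- Output distribution of a memoryless binary symmetric channel with crossover probability `a`
applied to an input with distribution `p` (each coordinate flipped independently w.p. `a`). -/
noncomputable def bscOutput {n : ℕ} (a : ℝ) (p : (Fin n → Bool) → ℝ) : (Fin n → Bool) → ℝ :=
  fun y => ∑ x : Fin n → Bool, p x * ∏ i, (if y i = x i then 1 - a else a)

/-- Distribution of the projection onto the coordinates in `s` of a vector with distribution `p`. -/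
noncomputable def projDist {n : ℕ} (p : (Fin n → Bool) → ℝ) (s : Finset (Fin n)) :
    ({ i // i ∈ s } → Bool) → ℝ :=
  fun y => ∑ x : Fin n → Bool, if (∀ i : { i // i ∈ s }, x i.val = y i) then p x else 0

/-- `H(X_S | S) = ∑_{s ⊆ [n]} P(S = s) H(X_s)`, where the random subset `S` contains each
element of `[n]` independently with probability `lam`. -/
noncomputable def condEntProj {n : ℕ} (lam : ℝ) (p : (Fin n → Bool) → ℝ) : ℝ :=
  ∑ s : Finset (Fin n), lam ^ s.card * (1 - lam) ^ (n - s.card) * entropyDist (projDist p s)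

/-- Transition kernel of a binary Markov chain: `P(b | a)` with off-diagonal entries
`q01 = P(1|0)` and `q10 = P(0|1)`. -/
def markovTrans (q01 q10 : ℝ) (a b : Bool) : ℝ :=
  if a then (if b then 1 - q10 else q10) else (if b then q01 else 1 - q01)

/-- Probability of the path `x` under the binary Markov chain with initial distribution
`(p0, p1)` and transition probabilities `q01, q10`. -/
noncomputable def markovPathProb (p0 p1 q01 q10 : ℝ) (n : ℕ) (x : Fin n → Bool) : ℝ :=
  ∏ i : Fin n,
    if (i : ℕ) = 0 then (if x i then p1 else p0)
    else markovTrans q01 q10 (x ⟨(i : ℕ) - 1, Nat.lt_of_le_of_lt (Nat.sub_le _ _) i.isLt⟩) (x i)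

section MGLAux
open Real Set

noncomputable def entL (x : ℝ) : ℝ := Real.log (1 - x) - Real.log x

lemma binEnt_eq (p : ℝ) : binEnt p = (Real.negMulLog p + Real.negMulLog (1-p)) / Real.log 2 := by
  unfold binEnt Real.negMulLog Real.logb; ring

lemma continuous_binEnt : Continuous binEnt := by
  have : binEnt = fun p => (Real.negMulLog p + Real.negMulLog (1-p)) / Real.log 2 :=
    funext binEnt_eq
  rw [this]; fun_prop

lemma entL_pos {x : ℝ} (h0 : 0 < x) (h1 : x < 1/2) : 0 < entL x :=
  sub_pos.2 (Real.log_lt_log h0 (by linarith))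

lemma hasDerivAt_binEnt {p : ℝ} (h0 : p ≠ 0) (h1 : p ≠ 1) :
    HasDerivAt binEnt (entL p / Real.log 2) p := by
  have h1' : (1:ℝ) - p ≠ 0 := by intro h; apply h1; linarith
  have d1 := Real.hasDerivAt_negMulLog h0
  have d0 : HasDerivAt (fun q : ℝ => 1 - q) (-1) p := by
    simpa using (hasDerivAt_id p).const_sub 1
  have d2 : HasDerivAt (fun q : ℝ => Real.negMulLog (1-q)) ((- Real.log (1-p) - 1) * (-1)) p :=
    (Real.hasDerivAt_negMulLog h1').comp p d0
  have := (d1.add d2).div_const (Real.log 2)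
  have heq : binEnt = fun p => (Real.negMulLog p + Real.negMulLog (1-p)) / Real.log 2 :=
    funext binEnt_eq
  rw [heq]
  exact this.congr_deriv (by unfold entL; ring)

lemma binEnt_zero : binEnt 0 = 0 := by simp [binEnt]

lemma binEnt_half : binEnt (1/2) = 1 := by
  have : Real.logb 2 (1/2) = -1 := by
    rw [show (1/2 : ℝ) = 2⁻¹ by norm_num, Real.logb_inv, Real.logb_self_eq_one] <;> norm_num
  norm_num [binEnt, this]

lemma binEnt_strictMonoOn : StrictMonoOn binEnt (Icc (0:ℝ) (1/2)) := by
  apply strictMonoOn_of_deriv_pos (convex_Icc _ _) continuous_binEnt.continuousOn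
  intro x hx
  rw [interior_Icc] at hx
  rw [(hasDerivAt_binEnt (ne_of_gt hx.1) (by intro h; rw [h] at hx; linarith [hx.2])).deriv]
  exact div_pos (entL_pos hx.1 hx.2) (Real.log_pos (by norm_num))

lemma binEnt_mapsTo {p : ℝ} (hp : p ∈ Icc (0:ℝ) (1/2)) : binEnt p ∈ Icc (0:ℝ) 1 := by
  constructor
  · rw [← binEnt_zero]
    exact binEnt_strictMonoOn.monotoneOn (by norm_num) hp hp.1
  · rw [← binEnt_half]
    exact binEnt_strictMonoOn.monotoneOn hp (by norm_num) hp.2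

lemma binEntInv_spec {y : ℝ} (hy : y ∈ Icc (0:ℝ) 1) :
    binEntInv y ∈ Icc (0:ℝ) (1/2) ∧ binEnt (binEntInv y) = y := by
  obtain ⟨p0, hp0mem, hp0⟩ : ∃ p ∈ Icc (0:ℝ) (1/2), binEnt p = y := by
    have h := intermediate_value_Icc (by norm_num : (0:ℝ) ≤ 1/2)
      continuous_binEnt.continuousOn
    have hy' : y ∈ Icc (binEnt 0) (binEnt (1/2)) := by rw [binEnt_zero, binEnt_half]; exact hy
    obtain ⟨p, hp, hpe⟩ := h hy'
    exact ⟨p, hp, hpe⟩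
  have hset : {p : ℝ | p ∈ Icc (0:ℝ) (1/2) ∧ y ≤ binEnt p} = Icc p0 (1/2) := by
    ext p
    constructor
    · rintro ⟨hp, hyp⟩
      refine ⟨?_, hp.2⟩
      by_contra hlt
      push_neg at hlt
      have := binEnt_strictMonoOn hp hp0mem hlt
      rw [hp0] at this
      linarith
    · rintro ⟨h1, h2⟩
      have hpmem : p ∈ Icc (0:ℝ) (1/2) := ⟨le_trans hp0mem.1 h1, h2⟩
      refine ⟨hpmem, ?_⟩
      rcases eq_or_lt_of_le h1 with rfl | hlt
      · exact hp0.ge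
      · have := binEnt_strictMonoOn hp0mem hpmem hlt
        rw [hp0] at this
        linarith
  rw [binEntInv, hset, csInf_Icc hp0mem.2]
  exact ⟨hp0mem, hp0⟩

lemma binEntInv_monotoneOn : MonotoneOn binEntInv (Icc (0:ℝ) 1) := by
  intro y1 h1 y2 h2 h12
  obtain ⟨hm1, he1⟩ := binEntInv_spec h1
  obtain ⟨hm2, he2⟩ := binEntInv_spec h2
  have := (binEnt_strictMonoOn.le_iff_le hm1 hm2).1 (by rw [he1, he2]; exact h12)
  exact this

lemma binEntInv_mem_Ioo {t : ℝ} (ht : t ∈ Ioo (0:ℝ) 1) : binEntInv t ∈ Ioo (0:ℝ) (1/2) := by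
  obtain ⟨hm, he⟩ := binEntInv_spec (Ioo_subset_Icc_self ht)
  constructor
  · rcases eq_or_lt_of_le hm.1 with h | h
    · exfalso; rw [← h, binEnt_zero] at he; linarith [ht.1]
    · exact h
  · rcases eq_or_lt_of_le hm.2 with h | h
    · exfalso; rw [h, binEnt_half] at he; linarith [ht.2]
    · exact h

lemma binEntInv_continuousOn : ContinuousOn binEntInv (Icc (0:ℝ) 1) := by
  haveI : CompactSpace (Icc (0:ℝ) (1/2)) := isCompact_iff_compactSpace.1 isCompact_Icc
  let e : Icc (0:ℝ) (1/2) → Icc (0:ℝ) 1 := fun p => ⟨binEnt p, binEnt_mapsTo p.2⟩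
  have hbij : Function.Bijective e := by
    constructor
    · intro p q hpq
      exact Subtype.ext (binEnt_strictMonoOn.injOn p.2 q.2 (congrArg Subtype.val hpq))
    · intro y
      exact ⟨⟨binEntInv y, (binEntInv_spec y.2).1⟩, Subtype.ext (binEntInv_spec y.2).2⟩
  let E : Icc (0:ℝ) (1/2) ≃ Icc (0:ℝ) 1 := Equiv.ofBijective e hbij
  have hcont : Continuous E :=
    Continuous.subtype_mk (continuous_binEnt.comp continuous_subtype_val) _
  let H := hcont.homeoOfEquivCompactToT2
  rw [continuousOn_iff_continuous_restrict]
  have hres : (Icc (0:ℝ) 1).restrict binEntInv = fun y => ((H.symm y : Icc (0:ℝ) (1/2)) : ℝ) := by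
    funext y
    have h1 : H ⟨binEntInv y, (binEntInv_spec y.2).1⟩ = y :=
      Subtype.ext (binEntInv_spec y.2).2
    have h2 := congrArg H.symm h1
    rw [Homeomorph.symm_apply_apply] at h2
    rw [← h2]
    rfl
  change Continuous ((Icc (0:ℝ) 1).restrict binEntInv)
  rw [hres]
  exact continuous_subtype_val.comp H.symm.continuous

lemma hasDerivAt_binEntInv {t : ℝ} (ht : t ∈ Ioo (0:ℝ) 1) :
    HasDerivAt binEntInv (Real.log 2 / entL (binEntInv t)) t := by
  have hx := binEntInv_mem_Ioo ht
  have hL := entL_pos hx.1 hx.2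
  have hf := hasDerivAt_binEnt (ne_of_gt hx.1) (by intro h; rw [h] at hx; linarith [hx.2])
  have hf' : entL (binEntInv t) / Real.log 2 ≠ 0 :=
    ne_of_gt (div_pos hL (Real.log_pos (by norm_num)))
  have hg : ContinuousAt binEntInv t :=
    binEntInv_continuousOn.continuousAt (Icc_mem_nhds ht.1 ht.2)
  have hev : ∀ᶠ y in nhds t, binEnt (binEntInv y) = y := by
    filter_upwards [Ioo_mem_nhds ht.1 ht.2] with y hy
    exact (binEntInv_spec (Ioo_subset_Icc_self hy)).2
  have := HasDerivAt.of_local_left_inverse hg hf hf' hev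
  exact this.congr_deriv (inv_div _ _)

noncomputable def entG (z : ℝ) : ℝ := z * (1 - z) * entL z

lemma hasDerivAt_entL {z : ℝ} (h0 : z ≠ 0) (h1 : z ≠ 1) :
    HasDerivAt entL (-1/(1-z) - 1/z) z := by
  have h1' : (1:ℝ) - z ≠ 0 := by intro h; apply h1; linarith
  have d0 : HasDerivAt (fun q : ℝ => 1 - q) (-1) z := by
    simpa using (hasDerivAt_id z).const_sub 1
  have d1 : HasDerivAt (fun q : ℝ => Real.log (1 - q)) ((-1)/(1-z)) z := d0.log h1'
  have d2 : HasDerivAt Real.log (1/z) z := by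
    simpa [one_div] using Real.hasDerivAt_log h0
  have := d1.sub d2
  exact this

lemma hasDerivAt_entG {z : ℝ} (h0 : z ≠ 0) (h1 : z ≠ 1) :
    HasDerivAt entG ((1-2*z) * entL z - 1) z := by
  have h1' : (1:ℝ) - z ≠ 0 := by intro h; apply h1; linarith
  have dp : HasDerivAt (fun q : ℝ => q * (1 - q)) (1-2*z) z := by
    have := (hasDerivAt_id z).mul ((hasDerivAt_id z).const_sub 1)
    exact this.congr_deriv (by simp only [id]; ring)
  have := dp.mul (hasDerivAt_entL h0 h1)
  have heq : entG = fun q : ℝ => (q * (1-q)) * entL q := by funext q; rfl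
  rw [heq]
  exact this.congr_deriv (by field_simp; ring)

lemma hasDerivAt_entGd {z : ℝ} (h0 : z ≠ 0) (h1 : z ≠ 1) :
    HasDerivAt (fun q : ℝ => (1-2*q) * entL q - 1)
      ((-2) * entL z + (1-2*z) * (-1/(1-z) - 1/z)) z := by
  have dc : HasDerivAt (fun q : ℝ => 1-2*q) (-2) z := by
    simpa using ((hasDerivAt_id z).const_mul (2:ℝ)).const_sub 1
  have := (dc.mul (hasDerivAt_entL h0 h1)).sub_const 1
  exact this

lemma entG_concaveOn {x : ℝ} (hx : x ∈ Ioo (0:ℝ) (1/2)) :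
    ConcaveOn ℝ (Icc x (1/2)) entG := by
  have hmem : ∀ z ∈ Icc x (1/2), z ≠ 0 ∧ z ≠ (1:ℝ) := by
    intro z hz
    constructor
    · exact ne_of_gt (lt_of_lt_of_le hx.1 hz.1)
    · intro h; rw [h] at hz; linarith [hz.2]
  apply AntitoneOn.concaveOn_of_deriv (convex_Icc _ _)
  · intro z hz
    obtain ⟨hz0, hz1⟩ := hmem z hz
    exact (hasDerivAt_entG hz0 hz1).continuousAt.continuousWithinAt
  · rw [interior_Icc]
    intro z hz
    obtain ⟨hz0, hz1⟩ := hmem z (Ioo_subset_Icc_self hz)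
    exact (hasDerivAt_entG hz0 hz1).differentiableAt.differentiableWithinAt
  · rw [interior_Icc]
    have heq : ∀ z ∈ Ioo x (1/2), deriv entG z = (1-2*z) * entL z - 1 := by
      intro z hz
      obtain ⟨hz0, hz1⟩ := hmem z (Ioo_subset_Icc_self hz)
      exact (hasDerivAt_entG hz0 hz1).deriv
    have hanti : AntitoneOn (fun q : ℝ => (1-2*q) * entL q - 1) (Ioo x (1/2)) := by
      apply antitoneOn_of_deriv_nonpos (convex_Ioo _ _)
      · intro z hz
        obtain ⟨hz0, hz1⟩ := hmem z (Ioo_subset_Icc_self hz)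
        exact (hasDerivAt_entGd hz0 hz1).continuousAt.continuousWithinAt
      · rw [interior_Ioo]
        intro z hz
        obtain ⟨hz0, hz1⟩ := hmem z (Ioo_subset_Icc_self hz)
        exact (hasDerivAt_entGd hz0 hz1).differentiableAt.differentiableWithinAt
      · rw [interior_Ioo]
        intro z hz
        obtain ⟨hz0, hz1⟩ := hmem z (Ioo_subset_Icc_self hz)
        rw [(hasDerivAt_entGd hz0 hz1).deriv]
        have hz0' : (0:ℝ) < z := lt_of_lt_of_le hx.1 (le_of_lt hz.1)
        have hz2 : z < 1/2 := hz.2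
        have hL : 0 < entL z := entL_pos hz0' hz2
        have h1 : (-2) * entL z ≤ 0 := by linarith
        have h2 : (1-2*z) * (-1/(1-z) - 1/z) ≤ 0 := by
          apply mul_nonpos_of_nonneg_of_nonpos
          · linarith
          · have : 0 < 1 - z := by linarith
            have e1 : (0:ℝ) < 1/(1-z) := by positivity
            have e2 : (0:ℝ) < 1/z := by positivity
            have : -1/(1-z) = -(1/(1-z)) := by ring
            linarith [this]
        linarith
    intro u hu v hv huv
    rw [heq u hu, heq v hv]
    exact hanti hu hv huv

lemma key_ineq {a x : ℝ} (ha : a ∈ Ioo (0:ℝ) (1/2)) (hx : x ∈ Ioo (0:ℝ) (1/2)) :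
    (1-2*a) * entG x ≤ entG (a + (1-2*a)*x) := by
  have hcc := entG_concaveOn hx
  have h1 : x ∈ Icc x (1/2) := ⟨le_refl x, le_of_lt hx.2⟩
  have h2 : (1/2:ℝ) ∈ Icc x (1/2) := ⟨le_of_lt hx.2, le_refl _⟩
  have hs := hcc.2 h1 h2 (by linarith [ha.2] : (0:ℝ) ≤ 1-2*a)
    (by linarith [ha.1] : (0:ℝ) ≤ 2*a) (by ring)
  have hy : (1-2*a) • x + (2*a) • (1/2 : ℝ) = a + (1-2*a)*x := by
    simp only [smul_eq_mul]; ring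
  have hhalf : entG (1/2) = 0 := by unfold entG entL; norm_num
  rw [hy] at hs
  simp only [smul_eq_mul, hhalf, mul_zero, add_zero] at hs
  exact hs


lemma mgl_y_mem {a x : ℝ} (ha : a ∈ Ioo (0:ℝ) (1/2)) (hx : x ∈ Ioo (0:ℝ) (1/2)) :
    a + (1-2*a)*x ∈ Ioo (0:ℝ) (1/2) := by
  constructor
  · nlinarith [ha.1, ha.2, hx.1, hx.2]
  · nlinarith [ha.1, ha.2, hx.1, hx.2]

noncomputable def mglF (a x : ℝ) : ℝ := (1-2*a) * entL (a + (1-2*a)*x) / entL x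

lemma hasDerivAt_mglF_aux {a x : ℝ} (ha : a ∈ Ioo (0:ℝ) (1/2)) (hx : x ∈ Ioo (0:ℝ) (1/2)) :
    HasDerivAt (mglF a)
      ((((1-2*a) * ((-1/(1-(a+(1-2*a)*x)) - 1/(a+(1-2*a)*x)) * (1-2*a))) * entL x -
        ((1-2*a) * entL (a+(1-2*a)*x)) * (-1/(1-x) - 1/x)) / entL x ^ 2) x := by
  have hy := mgl_y_mem ha hx
  have hy0 : a+(1-2*a)*x ≠ 0 := ne_of_gt hy.1
  have hy1 : a+(1-2*a)*x ≠ 1 := by intro h; rw [h] at hy; linarith [hy.2]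
  have hx0 : x ≠ 0 := ne_of_gt hx.1
  have hx1 : x ≠ 1 := by intro h; rw [h] at hx; linarith [hx.2]
  have hLx : entL x ≠ 0 := ne_of_gt (entL_pos hx.1 hx.2)
  have din : HasDerivAt (fun q : ℝ => a + (1-2*a)*q) (1-2*a) x := by
    simpa using ((hasDerivAt_id x).const_mul (1-2*a)).const_add a
  have dc : HasDerivAt (fun q : ℝ => (1-2*a) * entL (a+(1-2*a)*q))
      ((1-2*a) * ((-1/(1-(a+(1-2*a)*x)) - 1/(a+(1-2*a)*x)) * (1-2*a))) x :=
    ((hasDerivAt_entL hy0 hy1).comp x din).const_mul (1-2*a)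
  exact dc.div (hasDerivAt_entL hx0 hx1) hLx

lemma mglF_monotoneOn {a : ℝ} (ha : a ∈ Ioo (0:ℝ) (1/2)) :
    MonotoneOn (mglF a) (Ioo (0:ℝ) (1/2)) := by
  apply monotoneOn_of_deriv_nonneg (convex_Ioo _ _)
  · intro x hx
    exact (hasDerivAt_mglF_aux ha hx).continuousAt.continuousWithinAt
  · rw [interior_Ioo]
    intro x hx
    exact (hasDerivAt_mglF_aux ha hx).differentiableAt.differentiableWithinAt
  · rw [interior_Ioo]
    intro x hx
    rw [(hasDerivAt_mglF_aux ha hx).deriv]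
    set y := a + (1-2*a)*x with hydef
    have hy := mgl_y_mem ha hx
    have hxx : (0:ℝ) < x*(1-x) := by nlinarith [hx.1, hx.2]
    have hyy : (0:ℝ) < y*(1-y) := by nlinarith [hy.1, hy.2]
    have key : (1-2*a) * (x*(1-x)*entL x) ≤ y*(1-y)*entL y := key_ineq ha hx
    have h1 : (1-2*a)*entL x / (y*(1-y)) ≤ entL y / (x*(1-x)) := by
      rw [div_le_div_iff₀ hyy hxx]
      nlinarith [key]
    have hy0 : y ≠ 0 := ne_of_gt hy.1
    have hy1 : (1:ℝ) - y ≠ 0 := by intro h; linarith [hy.2, hydef.le, hydef.ge]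
    have hx0 : x ≠ 0 := ne_of_gt hx.1
    have hx1 : (1:ℝ) - x ≠ 0 := by intro h; linarith [hx.2]
    apply div_nonneg _ (by positivity)
    have e : ((1-2*a) * ((-1/(1-y) - 1/y) * (1-2*a))) * entL x -
        ((1-2*a) * entL y) * (-1/(1-x) - 1/x)
        = (1-2*a) * (entL y/(x*(1-x)) - (1-2*a)*entL x/(y*(1-y))) := by
      field_simp
      ring
    rw [e]
    apply mul_nonneg (by linarith [ha.2])
    linarith [h1]

lemma hasDerivAt_phi {a t : ℝ} (ha : a ∈ Ioo (0:ℝ) (1/2)) (ht : t ∈ Ioo (0:ℝ) 1) :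
    HasDerivAt (fun t => binEnt (bConv a (binEntInv t))) (mglF a (binEntInv t)) t := by
  have hx := binEntInv_mem_Ioo ht
  set x := binEntInv t
  have hbc : bConv a x = a + (1-2*a)*x := by unfold bConv; ring
  have hy := mgl_y_mem ha hx
  have d1 := hasDerivAt_binEntInv ht
  have d2 : HasDerivAt (bConv a) (1-2*a) x := by
    have hfun : bConv a = fun q => a + (1-2*a)*q := by funext q; unfold bConv; ring
    rw [hfun]
    simpa using ((hasDerivAt_id x).const_mul (1-2*a)).const_add a
  have d3 : HasDerivAt binEnt (entL (a+(1-2*a)*x) / Real.log 2) (bConv a x) := by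
    rw [hbc]
    exact hasDerivAt_binEnt (ne_of_gt hy.1) (by intro h; rw [h] at hy; linarith [hy.2])
  have dcomp := d3.comp t (d2.comp t d1)
  have hLx : entL x ≠ 0 := ne_of_gt (entL_pos hx.1 hx.2)
  have hlog2 : Real.log 2 ≠ 0 := ne_of_gt (Real.log_pos (by norm_num))
  have hval : entL (a+(1-2*a)*x) / Real.log 2 * ((1-2*a) * (Real.log 2 / entL x))
      = mglF a x := by
    unfold mglF
    field_simp
  rw [← hval]
  exact dcomp


end MGLAux

/-- For every fixed `α ∈ (0,1/2)`, the Mrs. Gerber's Lemma function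
`φ(t) = h(α * h⁻¹(t))` is convex on `[0,1]`. -/
theorem mgl_function_convex (a : ℝ) (ha : a ∈ Set.Ioo (0:ℝ) (1/2)) :
    ConvexOn ℝ (Set.Icc (0:ℝ) 1) (fun t => binEnt (bConv a (binEntInv t))) := by
  apply MonotoneOn.convexOn_of_deriv (convex_Icc _ _)
  · have hbc : Continuous (bConv a) := by unfold bConv; fun_prop
    exact continuous_binEnt.comp_continuousOn (hbc.comp_continuousOn binEntInv_continuousOn)
  · rw [interior_Icc]
    intro t ht
    exact (hasDerivAt_phi ha ht).differentiableAt.differentiableWithinAt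
  · rw [interior_Icc]
    intro t1 h1 t2 h2 h12
    rw [(hasDerivAt_phi ha h1).deriv, (hasDerivAt_phi ha h2).deriv]
    exact mglF_monotoneOn ha (binEntInv_mem_Ioo h1) (binEntInv_mem_Ioo h2)
      (binEntInv_monotoneOn (Set.Ioo_subset_Icc_self h1) (Set.Ioo_subset_Icc_self h2) h12)
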